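/- Let d ≥ 2 and let P₁ ⊂ ℤ × ℤ be the union over 0 ≤ m of the lattice points on: the vertical segment from (m(d+1), -m) to (m(d+1), d+1-m), the horizontal segment from (m(d+1), d+1-m) to ((m+1)(d-1), d+1-m), the vertical segment from ((m+1)(d-1), d+1-m) to ((m+1)(d-1), -m-1), and the horizontal segment from ((m+1)(d-1), -m-1) to ((m+1)(d+1), -m-1), where m ranges so that P₁ consists of R₀∪S₀∪T₀∪U₀∪⋯∪R_{(d-1)/2} if d is odd, and R₀∪S₀∪⋯∪R_{d/2-1}∪S_{d/2-1}∪T_{d/2-1} if d is even (with R_m, S_m, T_m, U_m the four segments above). Then no two points x, y ∈ P₁ satisfy x - y = (d, 0). -/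

import Mathlib

/-- Lattice points of the vertical segment R_m of the path P₁. -/
def Rseg (d m : ℤ) : Set (ℤ × ℤ) :=
  {p | p.1 = m * (d + 1) ∧ -m ≤ p.2 ∧ p.2 ≤ d + 1 - m}

/-- Lattice points of the horizontal segment S_m of the path P₁. -/
def Sseg (d m : ℤ) : Set (ℤ × ℤ) :=
  {p | p.2 = d + 1 - m ∧ m * (d + 1) ≤ p.1 ∧ p.1 ≤ (m + 1) * (d - 1)}

/-- Lattice points of the vertical segment T_m of the path P₁. -/
def Tseg (d m : ℤ) : Set (ℤ × ℤ) :=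
  {p | p.1 = (m + 1) * (d - 1) ∧ -m - 1 ≤ p.2 ∧ p.2 ≤ d + 1 - m}

/-- Lattice points of the horizontal segment U_m of the path P₁. -/
def Useg (d m : ℤ) : Set (ℤ × ℤ) :=
  {p | p.2 = -m - 1 ∧ (m + 1) * (d - 1) ≤ p.1 ∧ p.1 ≤ (m + 1) * (d + 1)}

/-- The avoiding staircase path P₁. -/
def P1 (d : ℤ) : Set (ℤ × ℤ) :=
  if Odd d then
    (⋃ m ∈ Set.Icc (0 : ℤ) ((d - 1) / 2), Rseg d m) ∪
    (⋃ m ∈ Set.Icc (0 : ℤ) ((d - 1) / 2 - 1), Sseg d m ∪ Tseg d m ∪ Useg d m)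
  else
    (⋃ m ∈ Set.Icc (0 : ℤ) (d / 2 - 1), Rseg d m ∪ Sseg d m ∪ Tseg d m) ∪
    (⋃ m ∈ Set.Icc (0 : ℤ) (d / 2 - 2), Useg d m)

lemma mem_P1_cases (d : ℤ) (hd : 2 ≤ d) (p : ℤ × ℤ) (hp : p ∈ P1 d) :
    (∃ m, 0 ≤ m ∧ 2*m+1 ≤ d ∧ p ∈ Rseg d m) ∨
    (∃ m, 0 ≤ m ∧ 2*m+2 ≤ d ∧ p ∈ Sseg d m) ∨
    (∃ m, 0 ≤ m ∧ 2*m+2 ≤ d ∧ p ∈ Tseg d m) ∨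
    (∃ m, 0 ≤ m ∧ 2*m+3 ≤ d ∧ p ∈ Useg d m) := by
  by_cases hodd : Odd d
  · rw [P1, if_pos hodd] at hp
    obtain ⟨e, he⟩ := hodd
    simp only [Set.mem_union, Set.mem_iUnion, Set.mem_Icc, exists_prop] at hp
    rcases hp with ⟨m, ⟨h0, h1⟩, hm⟩ | ⟨m, ⟨h0, h1⟩, (hm | hm) | hm⟩
    · exact Or.inl ⟨m, h0, by omega, hm⟩
    · exact Or.inr (Or.inl ⟨m, h0, by omega, hm⟩)
    · exact Or.inr (Or.inr (Or.inl ⟨m, h0, by omega, hm⟩))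
    · exact Or.inr (Or.inr (Or.inr ⟨m, h0, by omega, hm⟩))
  · rw [P1, if_neg hodd] at hp
    obtain ⟨e, he⟩ := Int.not_odd_iff_even.mp hodd
    simp only [Set.mem_union, Set.mem_iUnion, Set.mem_Icc, exists_prop] at hp
    rcases hp with ⟨m, ⟨h0, h1⟩, (hm | hm) | hm⟩ | ⟨m, ⟨h0, h1⟩, hm⟩
    · exact Or.inl ⟨m, h0, by omega, hm⟩
    · exact Or.inr (Or.inl ⟨m, h0, by omega, hm⟩)
    · exact Or.inr (Or.inr (Or.inl ⟨m, h0, by omega, hm⟩))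
    · exact Or.inr (Or.inr (Or.inr ⟨m, h0, by omega, hm⟩))

/-- No two points of P₁ differ by (d, 0). -/
theorem stmt_17 (d : ℤ) (hd : 2 ≤ d) :
    ∀ x ∈ P1 d, ∀ y ∈ P1 d, x - y ≠ ((d, 0) : ℤ × ℤ) := by
  intro x hx y hy hxy
  have h1 : x.1 - y.1 = d := by
    have := congrArg Prod.fst hxy; simpa using this
  have h2 : x.2 - y.2 = 0 := by
    have := congrArg Prod.snd hxy; simpa using this
  rcases mem_P1_cases d hd x hx with ⟨n, hn0, hnb, hxm⟩ | ⟨n, hn0, hnb, hxm⟩ |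
      ⟨n, hn0, hnb, hxm⟩ | ⟨n, hn0, hnb, hxm⟩ <;>
    rcases mem_P1_cases d hd y hy with ⟨m, hm0, hmb, hym⟩ | ⟨m, hm0, hmb, hym⟩ |
      ⟨m, hm0, hmb, hym⟩ | ⟨m, hm0, hmb, hym⟩ <;>
    simp only [Rseg, Sseg, Tseg, Useg, Set.mem_setOf_eq] at hxm hym <;>
    obtain ⟨e1, e2, e3⟩ := hxm <;> obtain ⟨f1, f2, f3⟩ := hym
  -- x ∈ R_n, y ∈ R_m
  · rcases le_or_gt n m with h | h
    · nlinarith [mul_nonneg (show (0:ℤ) ≤ m - n by omega) (show (0:ℤ) ≤ d + 1 by omega)]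
    · nlinarith [mul_nonneg (show (0:ℤ) ≤ n - m - 1 by omega) (show (0:ℤ) ≤ d + 1 by omega)]
  -- x ∈ R_n, y ∈ S_m
  · nlinarith [mul_nonneg (show (0:ℤ) ≤ m - n by omega) (show (0:ℤ) ≤ d + 1 by omega)]
  -- x ∈ R_n, y ∈ T_m
  · rcases (show n ≤ m ∨ n = m + 1 ∨ m + 2 ≤ n by omega) with h | h | h
    · nlinarith [mul_nonneg (show (0:ℤ) ≤ m - n by omega) (show (0:ℤ) ≤ d + 1 by omega)]
    · subst h; nlinarith []
    · nlinarith [mul_nonneg (show (0:ℤ) ≤ n - m - 2 by omega) (show (0:ℤ) ≤ d + 1 by omega)]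
  -- x ∈ R_n, y ∈ U_m
  · rcases (show n = m + 1 ∨ m + 2 ≤ n by omega) with h | h
    · subst h; nlinarith []
    · nlinarith [mul_nonneg (show (0:ℤ) ≤ n - m - 2 by omega) (show (0:ℤ) ≤ d + 1 by omega)]
  -- x ∈ S_n, y ∈ R_m
  · rcases (show n = m ∨ m + 1 ≤ n by omega) with h | h
    · subst h; nlinarith []
    · nlinarith [mul_nonneg (show (0:ℤ) ≤ n - m - 1 by omega) (show (0:ℤ) ≤ d + 1 by omega)]
  -- x ∈ S_n, y ∈ S_m
  · have h : n = m := by omega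
    subst h; nlinarith []
  -- x ∈ S_n, y ∈ T_m
  · rcases le_or_gt n (m + 1) with h | h
    · nlinarith [mul_nonneg (show (0:ℤ) ≤ m + 1 - n by omega) (show (0:ℤ) ≤ d - 1 by omega)]
    · nlinarith [mul_nonneg (show (0:ℤ) ≤ n - m - 2 by omega) (show (0:ℤ) ≤ d + 1 by omega)]
  -- x ∈ S_n, y ∈ U_m
  · omega
  -- x ∈ T_n, y ∈ R_m
  · rcases (show n ≤ m ∨ n = m + 1 ∨ m + 2 ≤ n by omega) with h | h | h
    · nlinarith [mul_nonneg (show (0:ℤ) ≤ m - n by omega) (show (0:ℤ) ≤ d - 1 by omega)]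
    · subst h
      have : d = 2 * m + 2 := by nlinarith []
      omega
    · have h5 : 2 * d ≤ 2 * m + 3 := by
        nlinarith [mul_nonneg (show (0:ℤ) ≤ n - m - 2 by omega) (show (0:ℤ) ≤ d - 1 by omega)]
      omega
  -- x ∈ T_n, y ∈ S_m
  · nlinarith [mul_nonneg (show (0:ℤ) ≤ m - n by omega) (show (0:ℤ) ≤ d - 1 by omega)]
  -- x ∈ T_n, y ∈ T_m
  · rcases (show n ≤ m ∨ n = m + 1 ∨ n = m + 2 ∨ m + 3 ≤ n by omega) with h | h | h | h
    · nlinarith [mul_nonneg (show (0:ℤ) ≤ m - n by omega) (show (0:ℤ) ≤ d - 1 by omega)]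
    · subst h; nlinarith []
    · subst h
      have : d = 2 := by nlinarith []
      omega
    · nlinarith [mul_nonneg (show (0:ℤ) ≤ n - m - 3 by omega) (show (0:ℤ) ≤ d - 1 by omega)]
  -- x ∈ T_n, y ∈ U_m
  · rcases le_or_gt n (m + 1) with h | h
    · nlinarith [mul_nonneg (show (0:ℤ) ≤ m + 1 - n by omega) (show (0:ℤ) ≤ d - 1 by omega)]
    · nlinarith [mul_nonneg (show (0:ℤ) ≤ n - m - 2 by omega) (show (0:ℤ) ≤ d - 1 by omega)]
  -- x ∈ U_n, y ∈ R_m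
  · nlinarith [mul_nonneg (show (0:ℤ) ≤ m - n - 1 by omega) (show (0:ℤ) ≤ d + 1 by omega)]
  -- x ∈ U_n, y ∈ S_m
  · omega
  -- x ∈ U_n, y ∈ T_m
  · nlinarith [mul_nonneg (show (0:ℤ) ≤ m - n by omega) (show (0:ℤ) ≤ d - 1 by omega)]
  -- x ∈ U_n, y ∈ U_m
  · have h : n = m := by omega
    subst h; nlinarith []
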